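/- Let (S,T) be a pair of random variables on {0,...,m} × {0,...,n} with binomial moments S_{i,j} = E[C(S,i) C(T,j)]. Then P(S ≥ 1, T ≥ 1) ≤ S_{1,1} − S_{1,2}/(n−1) − S_{2,1}/(m−1) + S_{2,2}/((m−1)(n−1)), provided m,n ≥ 2. (Bivariate Gumbel upper bound at k = l = 2) -/

import Mathlib

open MeasureTheory

private lemma gumbel_factor_nonneg (m s : ℕ) (hm : 2 ≤ m) (hs : s ≤ m) :
    0 ≤ (s : ℝ) - (s.choose 2 : ℝ) / ((m : ℝ) - 1) := by
  have hm1 : (2 : ℝ) ≤ (m : ℝ) := by exact_mod_cast hm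
  have hsm : (s : ℝ) ≤ (m : ℝ) := by exact_mod_cast hs
  have hs0 : (0 : ℝ) ≤ (s : ℝ) := Nat.cast_nonneg s
  have hpos : (0 : ℝ) < (m : ℝ) - 1 := by linarith
  rw [sub_nonneg, div_le_iff₀ hpos, Nat.cast_choose_two]
  nlinarith

private lemma gumbel_factor_ge_one (m s : ℕ) (hm : 2 ≤ m) (hs : s ≤ m) (hs1 : 1 ≤ s) :
    1 ≤ (s : ℝ) - (s.choose 2 : ℝ) / ((m : ℝ) - 1) := by
  have hm1 : (2 : ℝ) ≤ (m : ℝ) := by exact_mod_cast hm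
  have hsm : (s : ℝ) ≤ (m : ℝ) := by exact_mod_cast hs
  have hs1' : (1 : ℝ) ≤ (s : ℝ) := by exact_mod_cast hs1
  have hpos : (0 : ℝ) < (m : ℝ) - 1 := by linarith
  rw [← sub_nonneg]
  have : (s : ℝ) - (s.choose 2 : ℝ) / ((m : ℝ) - 1) - 1 =
      ((s : ℝ) * ((m : ℝ) - 1) - (s.choose 2 : ℝ) - ((m : ℝ) - 1)) / ((m : ℝ) - 1) := by
    field_simp
  rw [this]
  apply div_nonneg _ hpos.le
  rw [Nat.cast_choose_two]
  nlinarith [mul_nonneg (sub_nonneg.2 hs1') (sub_nonneg.2 (by linarith : (s : ℝ) ≤ 2 * (m : ℝ) - 2))]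

private lemma gumbel_key (m n s t : ℕ) (hm : 2 ≤ m) (hn : 2 ≤ n) (hs : s ≤ m) (ht : t ≤ n) :
    (if 1 ≤ s ∧ 1 ≤ t then (1 : ℝ) else 0) ≤
      ((s.choose 1 : ℝ) * (t.choose 1 : ℝ)) -
        ((s.choose 1 : ℝ) * (t.choose 2 : ℝ)) / ((n : ℝ) - 1) -
        ((s.choose 2 : ℝ) * (t.choose 1 : ℝ)) / ((m : ℝ) - 1) +
        ((s.choose 2 : ℝ) * (t.choose 2 : ℝ)) / (((m : ℝ) - 1) * ((n : ℝ) - 1)) := by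
  have hm1 : (2 : ℝ) ≤ (m : ℝ) := by exact_mod_cast hm
  have hn1 : (2 : ℝ) ≤ (n : ℝ) := by exact_mod_cast hn
  have hmne : ((m : ℝ) - 1) ≠ 0 := by linarith
  have hnne : ((n : ℝ) - 1) ≠ 0 := by linarith
  have hfac : ((s.choose 1 : ℝ) * (t.choose 1 : ℝ)) -
        ((s.choose 1 : ℝ) * (t.choose 2 : ℝ)) / ((n : ℝ) - 1) -
        ((s.choose 2 : ℝ) * (t.choose 1 : ℝ)) / ((m : ℝ) - 1) +
        ((s.choose 2 : ℝ) * (t.choose 2 : ℝ)) / (((m : ℝ) - 1) * ((n : ℝ) - 1)) =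
      ((s : ℝ) - (s.choose 2 : ℝ) / ((m : ℝ) - 1)) *
        ((t : ℝ) - (t.choose 2 : ℝ) / ((n : ℝ) - 1)) := by
    simp only [Nat.choose_one_right]
    field_simp
    ring
  rw [hfac]
  by_cases h : 1 ≤ s ∧ 1 ≤ t
  · rw [if_pos h]
    have h1 := gumbel_factor_ge_one m s hm hs h.1
    have h2 := gumbel_factor_ge_one n t hn ht h.2
    nlinarith [mul_le_mul h1 h2 (by norm_num : (0:ℝ) ≤ 1) (by linarith : (0:ℝ) ≤ (s : ℝ) - (s.choose 2 : ℝ) / ((m : ℝ) - 1))]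
  · rw [if_neg h]
    exact mul_nonneg (gumbel_factor_nonneg m s hm hs) (gumbel_factor_nonneg n t hn ht)

theorem bivariate_gumbel_bound_k2_l2
    {Ω : Type*} [MeasurableSpace Ω] (μ : Measure Ω) [IsProbabilityMeasure μ]
    (m n : ℕ) (S T : Ω → ℕ) (hS : Measurable S) (hT : Measurable T)
    (hSm : ∀ᵐ ω ∂μ, S ω ≤ m) (hTn : ∀ᵐ ω ∂μ, T ω ≤ n)
    (hm : 2 ≤ m) (hn : 2 ≤ n) :
    (μ {ω | 1 ≤ S ω ∧ 1 ≤ T ω}).toReal ≤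
      (∫ ω, (((S ω).choose 1 : ℝ) * ((T ω).choose 1 : ℝ)) ∂μ) -
        (∫ ω, (((S ω).choose 1 : ℝ) * ((T ω).choose 2 : ℝ)) ∂μ) / ((n : ℝ) - 1) -
        (∫ ω, (((S ω).choose 2 : ℝ) * ((T ω).choose 1 : ℝ)) ∂μ) / ((m : ℝ) - 1) +
        (∫ ω, (((S ω).choose 2 : ℝ) * ((T ω).choose 2 : ℝ)) ∂μ) /
          (((m : ℝ) - 1) * ((n : ℝ) - 1)) := by
  -- measurability and integrability of the moment integrands
  have hmeas : ∀ i j : ℕ, Measurable fun ω => (((S ω).choose i : ℝ) * ((T ω).choose j : ℝ)) := by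
    intro i j
    exact ((measurable_from_top (f := fun k : ℕ => ((k.choose i : ℝ)))).comp hS).mul
      ((measurable_from_top (f := fun k : ℕ => ((k.choose j : ℝ)))).comp hT)
  have hint : ∀ i j : ℕ, Integrable (fun ω => (((S ω).choose i : ℝ) * ((T ω).choose j : ℝ))) μ := by
    intro i j
    refine (integrable_const ((m.choose i : ℝ) * (n.choose j : ℝ))).mono'
      (hmeas i j).aestronglyMeasurable ?_
    filter_upwards [hSm, hTn] with ω h1 h2
    have hb1 : ((S ω).choose i : ℝ) ≤ (m.choose i : ℝ) := by
      exact_mod_cast Nat.choose_le_choose i h1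
    have hb2 : ((T ω).choose j : ℝ) ≤ (n.choose j : ℝ) := by
      exact_mod_cast Nat.choose_le_choose j h2
    have hp1 : (0 : ℝ) ≤ ((S ω).choose i : ℝ) := Nat.cast_nonneg _
    have hp2 : (0 : ℝ) ≤ ((T ω).choose j : ℝ) := Nat.cast_nonneg _
    rw [Real.norm_eq_abs, abs_of_nonneg (mul_nonneg hp1 hp2)]
    exact mul_le_mul hb1 hb2 hp2 (Nat.cast_nonneg _)
  set A : Set Ω := {ω | 1 ≤ S ω ∧ 1 ≤ T ω} with hA
  have hAmeas : MeasurableSet A := by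
    have : A = S ⁻¹' (Set.Ici 1) ∩ T ⁻¹' (Set.Ici 1) := by
      ext ω; simp [hA, Set.mem_Ici]
    rw [this]
    exact (hS measurableSet_Ici).inter (hT measurableSet_Ici)
  have hFint : Integrable (fun ω =>
      (((S ω).choose 1 : ℝ) * ((T ω).choose 1 : ℝ)) -
        (((S ω).choose 1 : ℝ) * ((T ω).choose 2 : ℝ)) / ((n : ℝ) - 1) -
        (((S ω).choose 2 : ℝ) * ((T ω).choose 1 : ℝ)) / ((m : ℝ) - 1) +
        (((S ω).choose 2 : ℝ) * ((T ω).choose 2 : ℝ)) / (((m : ℝ) - 1) * ((n : ℝ) - 1))) μ :=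
    (((hint 1 1).sub ((hint 1 2).div_const _)).sub ((hint 2 1).div_const _)).add
      ((hint 2 2).div_const _)
  have hFeq : (∫ ω, ((((S ω).choose 1 : ℝ) * ((T ω).choose 1 : ℝ)) -
        (((S ω).choose 1 : ℝ) * ((T ω).choose 2 : ℝ)) / ((n : ℝ) - 1) -
        (((S ω).choose 2 : ℝ) * ((T ω).choose 1 : ℝ)) / ((m : ℝ) - 1) +
        (((S ω).choose 2 : ℝ) * ((T ω).choose 2 : ℝ)) / (((m : ℝ) - 1) * ((n : ℝ) - 1))) ∂μ) =
      (∫ ω, (((S ω).choose 1 : ℝ) * ((T ω).choose 1 : ℝ)) ∂μ) -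
        (∫ ω, (((S ω).choose 1 : ℝ) * ((T ω).choose 2 : ℝ)) ∂μ) / ((n : ℝ) - 1) -
        (∫ ω, (((S ω).choose 2 : ℝ) * ((T ω).choose 1 : ℝ)) ∂μ) / ((m : ℝ) - 1) +
        (∫ ω, (((S ω).choose 2 : ℝ) * ((T ω).choose 2 : ℝ)) ∂μ) /
          (((m : ℝ) - 1) * ((n : ℝ) - 1)) := by
    rw [integral_add, integral_sub, integral_sub, integral_div, integral_div, integral_div]
    · exact hint 1 1
    · exact (hint 1 2).div_const _
    · exact (hint 1 1).sub ((hint 1 2).div_const _)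
    · exact (hint 2 1).div_const _
    · exact ((hint 1 1).sub ((hint 1 2).div_const _)).sub ((hint 2 1).div_const _)
    · exact (hint 2 2).div_const _
  rw [← hFeq, show (μ A).toReal = μ.real A from rfl, ← integral_indicator_one hAmeas]
  refine integral_mono_ae (Integrable.indicator (integrable_const 1) hAmeas) hFint ?_
  filter_upwards [hSm, hTn] with ω h1 h2
  have key := gumbel_key m n (S ω) (T ω) hm hn h1 h2
  by_cases hω : ω ∈ A
  · have hmem : 1 ≤ S ω ∧ 1 ≤ T ω := hω
    simpa [Set.indicator_of_mem hω, hmem] using key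
  · have hmem : ¬(1 ≤ S ω ∧ 1 ≤ T ω) := hω
    simpa [Set.indicator_of_notMem hω, hmem] using key
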